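/- Global-unitary purity formula: for a Haar-random unitary U on ℂ^d and a density matrix ρ, the purity satisfies tr(ρ²) = (d+1)·Σ_s E_U[P_U(s)²] − 1, where P_U(s) = ⟨s|UρU†|s⟩ and the sum runs over a fixed orthonormal basis {|s⟩}. -/

import Mathlib

open MeasureTheory Matrix
open scoped ComplexOrder

noncomputable section

instance (d : ℕ) : MeasurableSpace (Matrix (Fin d) (Fin d) ℂ) := by
  unfold Matrix; infer_instance

variable {d : ℕ}

abbrev G (d : ℕ) := Matrix.unitaryGroup (Fin d) ℂ

lemma measurable_entry (i j : Fin d) :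
    Measurable (fun U : G d => (U : Matrix (Fin d) (Fin d) ℂ) i j) := by
  have h1 : Measurable fun M : Matrix (Fin d) (Fin d) ℂ => M i j :=
    Measurable.comp (measurable_pi_apply j) (measurable_pi_apply i)
  exact h1.comp measurable_subtype_coe

lemma measurable_sig (ρ : Matrix (Fin d) (Fin d) ℂ) (i j : Fin d) :
    Measurable fun U : G d =>
      ((U : Matrix (Fin d) (Fin d) ℂ) * ρ * (U : Matrix (Fin d) (Fin d) ℂ)ᴴ) i j := by
  simp only [Matrix.mul_apply, Matrix.conjTranspose_apply]
  exact Finset.measurable_sum _ fun b _ =>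
    (Finset.measurable_sum _ fun a _ =>
      ((measurable_entry i a).mul measurable_const)).mul
      (Complex.continuous_conj.measurable.comp (measurable_entry j b))

def sig (ρ : Matrix (Fin d) (Fin d) ℂ) (U : G d) : Matrix (Fin d) (Fin d) ℂ :=
  (U : Matrix (Fin d) (Fin d) ℂ) * ρ * (U : Matrix (Fin d) (Fin d) ℂ)ᴴ

lemma measurable_sig' (ρ : Matrix (Fin d) (Fin d) ℂ) (i j : Fin d) :
    Measurable fun U : G d => sig ρ U i j := measurable_sig ρ i j

lemma sig_bound (ρ : Matrix (Fin d) (Fin d) ℂ) (U : G d) (i j : Fin d) :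
    ‖sig ρ U i j‖ ≤ ∑ a : Fin d, ∑ b : Fin d, ‖ρ a b‖ := by
  have hU : ∀ p q : Fin d, ‖(U : Matrix (Fin d) (Fin d) ℂ) p q‖ ≤ 1 := fun p q =>
    entry_norm_bound_of_unitary U.2 p q
  have : sig ρ U i j = ∑ a : Fin d, ∑ b : Fin d,
      (U : Matrix (Fin d) (Fin d) ℂ) i a * ρ a b *
        star ((U : Matrix (Fin d) (Fin d) ℂ) j b) := by
    simp only [sig, Matrix.mul_apply, Matrix.conjTranspose_apply, Finset.sum_mul]
    rw [Finset.sum_comm]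
  rw [this]
  refine (norm_sum_le _ _).trans (Finset.sum_le_sum fun a _ => ?_)
  refine (norm_sum_le _ _).trans (Finset.sum_le_sum fun b _ => ?_)
  rw [norm_mul, norm_mul, norm_star]
  calc ‖(U : Matrix (Fin d) (Fin d) ℂ) i a‖ * ‖ρ a b‖ * ‖(U : Matrix (Fin d) (Fin d) ℂ) j b‖
      ≤ 1 * ‖ρ a b‖ * 1 :=
        mul_le_mul (mul_le_mul (hU i a) le_rfl (norm_nonneg _) zero_le_one)
          (hU j b) (norm_nonneg _) (by positivity)
    _ = ‖ρ a b‖ := by ring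

lemma integrable_prod (ρ : Matrix (Fin d) (Fin d) ℂ)
    (μ : Measure (G d)) [IsProbabilityMeasure μ] (i j k l : Fin d) :
    Integrable (fun U : G d => sig ρ U i j * sig ρ U k l) μ := by
  set C : ℝ := ∑ a : Fin d, ∑ b : Fin d, ‖ρ a b‖ with hC
  have hC0 : 0 ≤ C := Finset.sum_nonneg fun a _ => Finset.sum_nonneg fun b _ => norm_nonneg _
  refine Integrable.mono' (integrable_const (C * C))
    (((measurable_sig' ρ i j).mul (measurable_sig' ρ k l)).aestronglyMeasurable) ?_
  filter_upwards with U
  rw [norm_mul]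
  exact mul_le_mul (sig_bound ρ U i j) (sig_bound ρ U k l) (norm_nonneg _) hC0

lemma sig_mul (ρ : Matrix (Fin d) (Fin d) ℂ) (V U : G d) :
    sig ρ (V * U) = (V : Matrix (Fin d) (Fin d) ℂ) * sig ρ U *
      (V : Matrix (Fin d) (Fin d) ℂ)ᴴ := by
  show ((V * U : G d) : Matrix (Fin d) (Fin d) ℂ) * ρ * _ = _
  rw [Matrix.UnitaryGroup.mul_val]
  simp only [sig, Matrix.conjTranspose_mul, Matrix.mul_assoc]

lemma measurable_lmul (V : G d) : Measurable (fun U : G d => V * U) := by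
  apply Measurable.subtype_mk
  apply measurable_pi_lambda; intro i
  apply measurable_pi_lambda; intro j
  simp only [Matrix.mul_apply]
  exact Finset.measurable_sum _ fun a _ => (measurable_const.mul (measurable_entry a j))

lemma integral_conj_invariant (ρ : Matrix (Fin d) (Fin d) ℂ)
    (μ : Measure (G d)) [IsProbabilityMeasure μ]
    (hHaar : ∀ V : G d, μ.map (fun U => V * U) = μ)
    (V : G d) (i j k l : Fin d) :
    ∫ U, ((V : Matrix (Fin d) (Fin d) ℂ) * sig ρ U * (V : Matrix (Fin d) (Fin d) ℂ)ᴴ) i j *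
        ((V : Matrix (Fin d) (Fin d) ℂ) * sig ρ U * (V : Matrix (Fin d) (Fin d) ℂ)ᴴ) k l ∂μ
      = ∫ U, sig ρ U i j * sig ρ U k l ∂μ := by
  conv_rhs => rw [← hHaar V]
  rw [integral_map (measurable_lmul V).aemeasurable]
  · simp only [sig_mul]
  · rw [hHaar V]
    exact (((measurable_sig' ρ i j).mul (measurable_sig' ρ k l))).aestronglyMeasurable

def zv (s : Fin d) : Fin d → ℂ := fun p => if p = s then Complex.I else 1

lemma zv_unit (s p : Fin d) : zv s p * star (zv s p) = 1 := by
  unfold zv; split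
  · simp [Complex.mul_conj, Complex.normSq_I]
  · simp

lemma diag_mem (s : Fin d) : Matrix.diagonal (zv s) ∈ Matrix.unitaryGroup (Fin d) ℂ := by
  rw [Matrix.mem_unitaryGroup_iff]
  rw [Matrix.star_eq_conjTranspose, Matrix.diagonal_conjTranspose,
    Matrix.diagonal_mul_diagonal]
  have h1 : (fun i => zv s i * star (zv s) i) = fun _ => (1 : ℂ) :=
    funext fun p => zv_unit s p
  rw [h1]
  exact Matrix.diagonal_one

lemma phase_rel (ρ : Matrix (Fin d) (Fin d) ℂ)
    (μ : Measure (G d)) [IsProbabilityMeasure μ]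
    (hHaar : ∀ V : G d, μ.map (fun U => V * U) = μ)
    (s i j k l : Fin d) :
    (zv s i * star (zv s j) * (zv s k * star (zv s l))) *
      ∫ U, sig ρ U i j * sig ρ U k l ∂μ = ∫ U, sig ρ U i j * sig ρ U k l ∂μ := by
  have h := integral_conj_invariant ρ μ hHaar ⟨Matrix.diagonal (zv s), diag_mem s⟩ i j k l
  have hent : ∀ (U : G d) (p q : Fin d),
      (Matrix.diagonal (zv s) * sig ρ U * (Matrix.diagonal (zv s))ᴴ) p q
        = zv s p * star (zv s q) * sig ρ U p q := by
    intro U p q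
    rw [Matrix.diagonal_conjTranspose, Matrix.mul_diagonal, Matrix.diagonal_mul]
    simp [Pi.star_apply]; ring
  simp only [hent] at h
  calc (zv s i * star (zv s j) * (zv s k * star (zv s l))) * ∫ U, sig ρ U i j * sig ρ U k l ∂μ
      = ∫ U, (zv s i * star (zv s j) * (zv s k * star (zv s l))) *
          (sig ρ U i j * sig ρ U k l) ∂μ := (integral_const_mul _ _).symm
    _ = ∫ U, zv s i * star (zv s j) * sig ρ U i j *
          (zv s k * star (zv s l) * sig ρ U k l) ∂μ := by
        congr 1; funext U; ring
    _ = ∫ U, sig ρ U i j * sig ρ U k l ∂μ := h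

lemma phase_vanish (ρ : Matrix (Fin d) (Fin d) ℂ)
    (μ : Measure (G d)) [IsProbabilityMeasure μ]
    (hHaar : ∀ V : G d, μ.map (fun U => V * U) = μ)
    (s i j k l : Fin d)
    (hne : zv s i * star (zv s j) * (zv s k * star (zv s l)) ≠ 1) :
    ∫ U, sig ρ U i j * sig ρ U k l ∂μ = 0 := by
  have h := phase_rel ρ μ hHaar s i j k l
  by_contra hA
  exact hne (mul_right_cancel₀ hA (by rw [one_mul]; exact h))

def cc : ℂ := ((Real.sqrt 2)⁻¹ : ℝ)

lemma cc_mul_cc : cc * cc = 1 / 2 := by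
  unfold cc
  rw [← Complex.ofReal_mul, ← mul_inv, Real.mul_self_sqrt (by norm_num : (0:ℝ) ≤ 2)]
  norm_num

lemma star_cc : star cc = cc := by
  unfold cc; exact Complex.conj_ofReal _

def had (s t : Fin d) : Matrix (Fin d) (Fin d) ℂ := fun p q =>
  if p = s then (if q = s then cc else if q = t then cc else 0)
  else if p = t then (if q = s then cc else if q = t then -cc else 0)
  else if p = q then 1 else 0

lemma sum_two {a b : Fin d} (hab : a ≠ b) (x y : ℂ) (g : Fin d → ℂ) :
    ∑ r, (if r = a then x else if r = b then y else 0) * g r = x * g a + y * g b := by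
  have key : ∀ r, (if r = a then x else if r = b then y else 0) * g r
      = (if r = a then x * g r else 0) + (if r = b then y * g r else 0) := by
    intro r
    by_cases h1 : r = a
    · subst h1; simp [Ne.symm hab, hab]
    · by_cases h2 : r = b <;> simp [h1, h2, Ne.symm hab]
  simp_rw [key, Finset.sum_add_distrib, Finset.sum_ite_eq' Finset.univ, Finset.mem_univ, if_true]

lemma sum_one (p : Fin d) (g : Fin d → ℂ) :
    ∑ r, (if p = r then (1:ℂ) else 0) * g r = g p := by
  simp_rw [ite_mul, one_mul, zero_mul, Finset.sum_ite_eq Finset.univ, Finset.mem_univ, if_true]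

lemma had_row_s (s t r : Fin d) (hst : s ≠ t) :
    had s t s r = if r = s then cc else if r = t then cc else 0 := by
  unfold had; simp

lemma had_row_t (s t r : Fin d) (hst : s ≠ t) :
    had s t t r = if r = s then cc else if r = t then -cc else 0 := by
  unfold had; simp [Ne.symm hst]

lemma had_row_o (s t p r : Fin d) (hps : p ≠ s) (hpt : p ≠ t) :
    had s t p r = if p = r then 1 else 0 := by
  unfold had; simp [hps, hpt]

lemma had_col_s (s t r : Fin d) (hst : s ≠ t) :
    had s t r s = if r = s then cc else if r = t then cc else 0 := by
  have hts := Ne.symm hst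
  unfold had
  by_cases h1 : r = s
  · simp [h1]
  · by_cases h2 : r = t <;> simp [h1, h2, hts, hst]

lemma had_col_t (s t r : Fin d) (hst : s ≠ t) :
    had s t r t = if r = s then cc else if r = t then -cc else 0 := by
  have hts := Ne.symm hst
  unfold had
  by_cases h1 : r = s
  · simp [h1, hst]
  · by_cases h2 : r = t <;> simp [h1, h2, hst, hts]

lemma had_herm (s t : Fin d) (hst : s ≠ t) : (had s t)ᴴ = had s t := by
  funext p q
  rw [Matrix.conjTranspose_apply]
  unfold had
  by_cases h1 : q = s <;> by_cases h2 : q = t <;> by_cases h3 : p = s <;> by_cases h4 : p = t <;>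
    simp_all [star_cc, eq_comm]

lemma had_mem (s t : Fin d) (hst : s ≠ t) : had s t ∈ Matrix.unitaryGroup (Fin d) ℂ := by
  have hts := Ne.symm hst
  rw [Matrix.mem_unitaryGroup_iff, Matrix.star_eq_conjTranspose, had_herm s t hst]
  funext p q
  rw [Matrix.mul_apply, Matrix.one_apply]
  have h2 : cc * cc + cc * cc = 1 := by rw [cc_mul_cc]; norm_num
  by_cases h3 : p = s
  · rw [h3]
    simp_rw [had_row_s _ t _ hst, sum_two hst, had_row_s _ t _ hst, had_row_t s _ _ hst]
    by_cases h4 : q = s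
    · rw [h4]; simp [hst, h2]
    · by_cases h5 : q = t
      · rw [h5]; simp [hts, hst]
      · have hsq : s ≠ q := fun h => h4 h.symm
        simp [h4, h5, hsq]
  · by_cases h4 : p = t
    · rw [h4]
      simp_rw [had_row_t s _ _ hst, sum_two hst, had_row_s _ t _ hst, had_row_t s _ _ hst]
      by_cases h5 : q = s
      · rw [h5]; simp [hst, hts]
      · by_cases h6 : q = t
        · rw [h6]; simp [hts]; exact h2
        · have htq : t ≠ q := fun h => h6 h.symm
          simp [h5, h6, htq]
    · have hro : ∀ r, had s t p r = if p = r then (1:ℂ) else 0 :=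
        fun r => had_row_o s t p r h3 h4
      simp_rw [hro, sum_one]
      exact hro q

lemma had_conj_entry (s t : Fin d) (hst : s ≠ t) (A : Matrix (Fin d) (Fin d) ℂ) :
    (had s t * A * (had s t)ᴴ) s s = (1/2) * (A s s + A s t + A t s + A t t) := by
  rw [had_herm s t hst]
  have h1 : ∀ j, (had s t * A) s j = cc * A s j + cc * A t j := by
    intro j
    rw [Matrix.mul_apply]
    simp_rw [had_row_s _ t _ hst]
    rw [sum_two hst]
  rw [Matrix.mul_apply]
  have h3 : ∀ j, (had s t * A) s j * had s t j s
      = (if j = s then cc else if j = t then cc else 0) * (had s t * A) s j := by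
    intro j; rw [had_col_s s t j hst, mul_comm]
  simp_rw [h3]
  rw [sum_two hst, h1, h1]
  have : cc * (cc * A s s + cc * A t s) + cc * (cc * A s t + cc * A t t)
      = (cc*cc) * (A s s + A s t + A t s + A t t) := by ring
  rw [this, cc_mul_cc]

lemma pair_rel (ρ : Matrix (Fin d) (Fin d) ℂ)
    (μ : Measure (G d)) [IsProbabilityMeasure μ]
    (hHaar : ∀ V : G d, μ.map (fun U => V * U) = μ)
    (s t : Fin d) (hst : s ≠ t) :
    4 * ∫ U, sig ρ U s s * sig ρ U s s ∂μ
      = (∫ U, sig ρ U s s * sig ρ U s s ∂μ) + (∫ U, sig ρ U t t * sig ρ U t t ∂μ)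
        + (∫ U, sig ρ U s s * sig ρ U t t ∂μ) + (∫ U, sig ρ U t t * sig ρ U s s ∂μ)
        + (∫ U, sig ρ U s t * sig ρ U t s ∂μ) + (∫ U, sig ρ U t s * sig ρ U s t ∂μ) := by
  have hts := Ne.symm hst
  have hinv := integral_conj_invariant ρ μ hHaar ⟨had s t, had_mem s t hst⟩ s s s s
  simp only [had_conj_entry s t hst] at hinv
  -- hinv : ∫ (1/2 (..)) * (1/2 (..)) = ∫ σss σss
  set S : Finset (Fin d) := {s, t} with hS
  have hexp : ∀ U : G d,
      (1/2 : ℂ) * (sig ρ U s s + sig ρ U s t + sig ρ U t s + sig ρ U t t) *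
        ((1/2 : ℂ) * (sig ρ U s s + sig ρ U s t + sig ρ U t s + sig ρ U t t))
      = (1/4 : ℂ) * ∑ z ∈ (S ×ˢ S) ×ˢ (S ×ˢ S),
            sig ρ U z.1.1 z.1.2 * sig ρ U z.2.1 z.2.2 := by
    intro U
    rw [Finset.sum_product]
    simp_rw [Finset.sum_product]
    simp_rw [hS, Finset.sum_pair hst]
    ring
  simp_rw [hexp] at hinv
  rw [integral_const_mul, integral_finset_sum _ (fun z _ =>
    integrable_prod ρ μ z.1.1 z.1.2 z.2.1 z.2.2)] at hinv
  rw [Finset.sum_product] at hinv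
  simp_rw [Finset.sum_product, hS, Finset.sum_pair hst] at hinv
  -- vanishing lemmas
  have hzs : zv s s = Complex.I := if_pos rfl
  have hzt : zv s t = (1:ℂ) := if_neg hts
  have hI : Complex.I ≠ 1 := by
    intro h; have := congrArg Complex.re h; simp at this
  have hnI : -Complex.I ≠ 1 := by
    intro h; have := congrArg Complex.re h; simp at this
  have hm1 : (-1 : ℂ) ≠ 1 := by norm_num
  have v1 : ∫ U, sig ρ U s s * sig ρ U s t ∂μ = 0 := by
    apply phase_vanish ρ μ hHaar s
    rw [hzs, hzt]; simp [Complex.conj_I, hI, hnI, hm1]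
  have v2 : ∫ U, sig ρ U s s * sig ρ U t s ∂μ = 0 := by
    apply phase_vanish ρ μ hHaar s
    rw [hzs, hzt]; simp [Complex.conj_I, hI, hnI, hm1]
  have v3 : ∫ U, sig ρ U s t * sig ρ U s s ∂μ = 0 := by
    apply phase_vanish ρ μ hHaar s
    rw [hzs, hzt]; simp [Complex.conj_I, hI, hnI, hm1]
  have v4 : ∫ U, sig ρ U s t * sig ρ U s t ∂μ = 0 := by
    apply phase_vanish ρ μ hHaar s
    rw [hzs, hzt]; simp [Complex.conj_I, hI, hnI, hm1]
  have v5 : ∫ U, sig ρ U s t * sig ρ U t t ∂μ = 0 := by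
    apply phase_vanish ρ μ hHaar s
    rw [hzs, hzt]; simp [Complex.conj_I, hI, hnI, hm1]
  have v6 : ∫ U, sig ρ U t s * sig ρ U s s ∂μ = 0 := by
    apply phase_vanish ρ μ hHaar s
    rw [hzs, hzt]; simp [Complex.conj_I, hI, hnI, hm1]
  have v7 : ∫ U, sig ρ U t s * sig ρ U t s ∂μ = 0 := by
    apply phase_vanish ρ μ hHaar s
    rw [hzs, hzt]; simp [Complex.conj_I, hI, hnI, hm1]
  have v8 : ∫ U, sig ρ U t s * sig ρ U t t ∂μ = 0 := by
    apply phase_vanish ρ μ hHaar s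
    rw [hzs, hzt]; simp [Complex.conj_I, hI, hnI, hm1]
  have v9 : ∫ U, sig ρ U t t * sig ρ U s t ∂μ = 0 := by
    apply phase_vanish ρ μ hHaar s
    rw [hzs, hzt]; simp [Complex.conj_I, hI, hnI, hm1]
  have v10 : ∫ U, sig ρ U t t * sig ρ U t s ∂μ = 0 := by
    apply phase_vanish ρ μ hHaar s
    rw [hzs, hzt]; simp [Complex.conj_I, hI, hnI, hm1]
  linear_combination (-4:ℂ) * hinv + v1 + v2 + v3 + v4 + v5 + v6 + v7 + v8 + v9 + v10

lemma trace_sig (ρ : Matrix (Fin d) (Fin d) ℂ) (hτ : ρ.trace = 1) (U : G d) :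
    (sig ρ U).trace = 1 := by
  unfold sig
  rw [Matrix.trace_mul_cycle, ← Matrix.star_eq_conjTranspose,
    Matrix.UnitaryGroup.star_mul_self, one_mul, hτ]

lemma sig_mul_sig (ρ : Matrix (Fin d) (Fin d) ℂ) (U : G d) :
    sig ρ U * sig ρ U = sig (ρ * ρ) U := by
  unfold sig
  have h1 : (U : Matrix (Fin d) (Fin d) ℂ)ᴴ * (U : Matrix (Fin d) (Fin d) ℂ) = 1 := by
    rw [← Matrix.star_eq_conjTranspose]; exact Matrix.UnitaryGroup.star_mul_self U
  calc (U : Matrix (Fin d) (Fin d) ℂ) * ρ * (U : Matrix (Fin d) (Fin d) ℂ)ᴴ *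
        ((U : Matrix (Fin d) (Fin d) ℂ) * ρ * (U : Matrix (Fin d) (Fin d) ℂ)ᴴ)
      = (U : Matrix (Fin d) (Fin d) ℂ) * ρ * ((U : Matrix (Fin d) (Fin d) ℂ)ᴴ *
          (U : Matrix (Fin d) (Fin d) ℂ)) * ρ * (U : Matrix (Fin d) (Fin d) ℂ)ᴴ := by
        simp only [Matrix.mul_assoc]
    _ = _ := by rw [h1]; simp only [Matrix.mul_one, Matrix.mul_assoc]

lemma key1 (ρ : Matrix (Fin d) (Fin d) ℂ) (hτ : ρ.trace = 1)
    (μ : Measure (G d)) [IsProbabilityMeasure μ] :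
    ∑ s : Fin d, ∑ t : Fin d, ∫ U, sig ρ U s s * sig ρ U t t ∂μ = 1 := by
  have step : ∫ U, ∑ s : Fin d, ∑ t : Fin d, sig ρ U s s * sig ρ U t t ∂μ
      = ∑ s : Fin d, ∑ t : Fin d, ∫ U, sig ρ U s s * sig ρ U t t ∂μ := by
    rw [integral_finset_sum _ (fun s _ => integrable_finset_sum _
      (fun t _ => integrable_prod ρ μ s s t t))]
    exact Finset.sum_congr rfl fun s _ =>
      integral_finset_sum _ (fun t _ => integrable_prod ρ μ s s t t)
  rw [← step]
  have point : ∀ U : G d, ∑ s : Fin d, ∑ t : Fin d, sig ρ U s s * sig ρ U t t = 1 := by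
    intro U
    rw [← Finset.sum_mul_sum]
    have htr : ∑ s : Fin d, sig ρ U s s = (sig ρ U).trace := rfl
    rw [htr, trace_sig ρ hτ U, one_mul]
  simp_rw [point]
  simp

lemma key2 (ρ : Matrix (Fin d) (Fin d) ℂ)
    (μ : Measure (G d)) [IsProbabilityMeasure μ] :
    ∑ s : Fin d, ∑ t : Fin d, ∫ U, sig ρ U s t * sig ρ U t s ∂μ = (ρ * ρ).trace := by
  have step : ∫ U, ∑ s : Fin d, ∑ t : Fin d, sig ρ U s t * sig ρ U t s ∂μ
      = ∑ s : Fin d, ∑ t : Fin d, ∫ U, sig ρ U s t * sig ρ U t s ∂μ := by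
    rw [integral_finset_sum _ (fun s _ => integrable_finset_sum _
      (fun t _ => integrable_prod ρ μ s t t s))]
    exact Finset.sum_congr rfl fun s _ =>
      integral_finset_sum _ (fun t _ => integrable_prod ρ μ s t t s)
  rw [← step]
  have point : ∀ U : G d, ∑ s : Fin d, ∑ t : Fin d, sig ρ U s t * sig ρ U t s
      = (ρ * ρ).trace := by
    intro U
    have h1 : ∑ s : Fin d, ∑ t : Fin d, sig ρ U s t * sig ρ U t s
        = (sig ρ U * sig ρ U).trace := by
      rw [Matrix.trace]
      refine Finset.sum_congr rfl fun s _ => ?_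
      rw [Matrix.diag_apply, Matrix.mul_apply]
    rw [h1, sig_mul_sig]
    unfold sig
    rw [Matrix.trace_mul_cycle, ← Matrix.star_eq_conjTranspose,
      Matrix.UnitaryGroup.star_mul_self, one_mul]
  simp_rw [point]
  simp


/-- Global-unitary purity formula: for `U` Haar-random on `U(d)` (any
left-invariant probability measure) and with `P_U(s) = ⟨s|UρU†|s⟩`,
`tr(ρ²) = (d+1) Σ_s E_U[P_U(s)²] − 1`. -/
theorem haar_purity_formula (d : ℕ) (hd : 0 < d)
    (ρ : Matrix (Fin d) (Fin d) ℂ) (hρ : ρ.PosSemidef) (hτ : ρ.trace = 1)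
    (μ : Measure (Matrix.unitaryGroup (Fin d) ℂ)) [IsProbabilityMeasure μ]
    (hHaar : ∀ V : Matrix.unitaryGroup (Fin d) ℂ, μ.map (fun U => V * U) = μ) :
    (ρ ^ 2).trace
      = ((d : ℂ) + 1) *
          (∑ s : Fin d, ∫ U : Matrix.unitaryGroup (Fin d) ℂ,
            ((((U : Matrix (Fin d) (Fin d) ℂ) * ρ *
              (U : Matrix (Fin d) (Fin d) ℂ)ᴴ) s s) ^ 2) ∂μ) - 1 := by

  have hgoal : ∀ s : Fin d, (∫ U : G d, ((((U : Matrix (Fin d) (Fin d) ℂ) * ρ *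
      (U : Matrix (Fin d) (Fin d) ℂ)ᴴ) s s) ^ 2) ∂μ)
      = ∫ U : G d, sig ρ U s s * sig ρ U s s ∂μ := by
    intro s; congr 1; funext U; rw [sq]; rfl
  simp_rw [hgoal]
  set M : ℂ := ∑ s : Fin d, ∫ U : G d, sig ρ U s s * sig ρ U s s ∂μ with hM
  set Z : ℂ := ∑ s : Fin d, ∑ t ∈ Finset.univ.erase s,
    ∫ U : G d, sig ρ U s s * sig ρ U t t ∂μ with hZ
  set Y : ℂ := ∑ s : Fin d, ∑ t ∈ Finset.univ.erase s,
    ∫ U : G d, sig ρ U s t * sig ρ U t s ∂μ with hY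
  have hcard : ∀ s : Fin d, (Finset.univ.erase s).card = d - 1 := fun s => by
    rw [Finset.card_erase_of_mem (Finset.mem_univ s), Finset.card_univ, Fintype.card_fin]
  have swapSum : ∀ f : Fin d → Fin d → ℂ,
      (∑ s : Fin d, ∑ t ∈ Finset.univ.erase s, f s t)
        = ∑ t : Fin d, ∑ s ∈ Finset.univ.erase t, f s t := by
    intro f
    exact Finset.sum_comm' (by intro x y; simp [Finset.mem_erase, ne_comm])
  have hzy1 : M + Z = 1 := by
    rw [← key1 ρ hτ μ, hM, hZ, ← Finset.sum_add_distrib]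
    exact Finset.sum_congr rfl fun s _ =>
      Finset.add_sum_erase Finset.univ
        (fun t => ∫ U : G d, sig ρ U s s * sig ρ U t t ∂μ) (Finset.mem_univ s)
  have hzy2 : M + Y = (ρ * ρ).trace := by
    rw [← key2 ρ μ, hM, hY, ← Finset.sum_add_distrib]
    exact Finset.sum_congr rfl fun s _ =>
      Finset.add_sum_erase Finset.univ
        (fun t => ∫ U : G d, sig ρ U s t * sig ρ U t s ∂μ) (Finset.mem_univ s)
  have hbig : (∑ s : Fin d, ∑ t ∈ Finset.univ.erase s,
        (4 * ∫ U : G d, sig ρ U s s * sig ρ U s s ∂μ))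
      = ∑ s : Fin d, ∑ t ∈ Finset.univ.erase s,
        ((∫ U : G d, sig ρ U s s * sig ρ U s s ∂μ)
          + (∫ U : G d, sig ρ U t t * sig ρ U t t ∂μ)
          + (∫ U : G d, sig ρ U s s * sig ρ U t t ∂μ)
          + (∫ U : G d, sig ρ U t t * sig ρ U s s ∂μ)
          + (∫ U : G d, sig ρ U s t * sig ρ U t s ∂μ)
          + (∫ U : G d, sig ρ U t s * sig ρ U s t ∂μ)) := by
    refine Finset.sum_congr rfl fun s _ => Finset.sum_congr rfl fun t ht => ?_
    exact pair_rel ρ μ hHaar s t (Finset.mem_erase.1 ht).1.symm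
  -- evaluate pieces
  have hc1 : (∑ s : Fin d, ∑ t ∈ Finset.univ.erase s,
        (4 * ∫ U : G d, sig ρ U s s * sig ρ U s s ∂μ))
      = ((d - 1 : ℕ) : ℂ) * (4 * M) := by
    simp_rw [Finset.sum_const, hcard, nsmul_eq_mul, hM, Finset.mul_sum]
  have hS1 : (∑ s : Fin d, ∑ _t ∈ Finset.univ.erase s,
      ∫ U : G d, sig ρ U s s * sig ρ U s s ∂μ) = ((d - 1 : ℕ) : ℂ) * M := by
    simp_rw [Finset.sum_const, hcard, nsmul_eq_mul, hM, Finset.mul_sum]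
  have hS2 : (∑ s : Fin d, ∑ t ∈ Finset.univ.erase s,
      ∫ U : G d, sig ρ U t t * sig ρ U t t ∂μ) = ((d - 1 : ℕ) : ℂ) * M := by
    rw [swapSum (fun s t => ∫ U : G d, sig ρ U t t * sig ρ U t t ∂μ)]
    simp_rw [Finset.sum_const, hcard, nsmul_eq_mul, hM, Finset.mul_sum]
  have hS4 : (∑ s : Fin d, ∑ t ∈ Finset.univ.erase s,
      ∫ U : G d, sig ρ U t t * sig ρ U s s ∂μ) = Z := by
    rw [swapSum (fun s t => ∫ U : G d, sig ρ U t t * sig ρ U s s ∂μ), hZ]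
  have hS6 : (∑ s : Fin d, ∑ t ∈ Finset.univ.erase s,
      ∫ U : G d, sig ρ U t s * sig ρ U s t ∂μ) = Y := by
    rw [swapSum (fun s t => ∫ U : G d, sig ρ U t s * sig ρ U s t ∂μ), hY]
  simp only [Finset.sum_add_distrib] at hbig
  rw [hc1, hS1, hS2, hS4, hS6, ← hZ, ← hY] at hbig
  have hcast : ((d - 1 : ℕ) : ℂ) = (d : ℂ) - 1 := by
    push_cast [Nat.cast_sub hd]; ring
  rw [hcast] at hbig
  rw [pow_two]
  linear_combination (-1 : ℂ) * hzy2 + (-1 : ℂ) * hzy1 + (-1/2 : ℂ) * hbig
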